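/- Fix t ≥ 3 and α ∈ [(t−1)/t, t−1). For m sufficiently large and n = ⌈(6m/t)^{(t−1)/α}⌉, we have m ∈ [t(n−1)^{α/(t−1)}/6, t·n^{α/(t−1)}/6], and with d = ⌈n^{(t(α−1)+1)/(t−1)}⌉: C(2⌊t·n^{α/(t−1)}/6⌋ − 1, t−1) + (n−2m)(t−1)·d/(t(n−1)^{α/(t−1)}/6) < 6n^α. -/

import Mathlib

open Real Filter Nat

private lemma succ_pow_le_aux (n : ℕ) (hn : 10 ≤ n) : (n+1)^(n+1) ≤ 3*n*n^n := by
  have hn0 : (0:ℝ) < n := by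
    have : (10:ℝ) ≤ n := by exact_mod_cast hn
    linarith
  have h1 : (1 + 1/(n:ℝ))^n ≤ Real.exp 1 := by
    have := Real.add_one_le_exp (1/(n:ℝ))
    calc (1 + 1/(n:ℝ))^n ≤ (Real.exp (1/(n:ℝ)))^n := by
          apply pow_le_pow_left₀ (by positivity) (by linarith)
      _ = Real.exp 1 := by
          rw [← Real.exp_nat_mul]
          congr 1
          field_simp
  have h2 : ((n:ℝ)+1)^n ≤ Real.exp 1 * (n:ℝ)^n := by
    have : ((n:ℝ)+1)^n = (1 + 1/(n:ℝ))^n * (n:ℝ)^n := by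
      rw [← mul_pow]; congr 1; field_simp
    rw [this]
    exact mul_le_mul_of_nonneg_right h1 (by positivity)
  have he : Real.exp 1 < 2.7182818286 := Real.exp_one_lt_d9
  have hn10 : (10:ℝ) ≤ n := by exact_mod_cast hn
  have h3 : ((n:ℝ)+1)^(n+1) ≤ 3*(n:ℝ)*(n:ℝ)^n := by
    have heq : ((n:ℝ)+1)^(n+1) = ((n:ℝ)+1) * ((n:ℝ)+1)^n := by ring
    rw [heq]
    calc ((n:ℝ)+1) * ((n:ℝ)+1)^n ≤ ((n:ℝ)+1) * (Real.exp 1 * (n:ℝ)^n) :=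
          mul_le_mul_of_nonneg_left h2 (by linarith)
      _ ≤ 3*(n:ℝ)*(n:ℝ)^n := by
          have hp : (0:ℝ) ≤ (n:ℝ)^n := by positivity
          have hkey : ((n:ℝ)+1) * Real.exp 1 ≤ 3*(n:ℝ) := by nlinarith
          nlinarith
  exact_mod_cast h3

private lemma nat_fact_bound : ∀ t : ℕ, 3 ≤ t → t^t < 2*3^t*(t-1)! := by
  have base : ∀ t : ℕ, 3 ≤ t → t ≤ 10 → t^t < 2*3^t*(t-1)! := by
    decide
  intro t ht
  rcases le_or_gt t 10 with h | h
  · exact base t ht h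
  · clear ht
    induction t with
    | zero => omega
    | succ n ih =>
      rcases le_or_gt n 10 with h2 | h2
      · have hn : n = 10 := by omega
        subst hn
        norm_num [Nat.factorial]
      · have ihn := ih h2
        have key : (n+1)^(n+1) ≤ 3*n*n^n := succ_pow_le_aux n (by omega)
        have hs : (n+1) - 1 = n := by omega
        rw [hs]
        calc (n+1)^(n+1) ≤ 3*n*n^n := key
          _ < 3*n*(2*3^n*(n-1)!) := mul_lt_mul_of_pos_left ihn (by omega)
          _ = 2*3^(n+1)*n ! := by
              rw [← Nat.mul_factorial_pred (show n ≠ 0 by omega)]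
              ring


set_option maxHeartbeats 1000000 in
/-- The degree upper bound for `V_L`-vertices in the NP-hardness gadget: for `m`
sufficiently large, with `n = ⌈(6m/t)^{(t−1)/α}⌉` and `d = ⌈n^{(t(α−1)+1)/(t−1)}⌉`,
we have `m ∈ [t(n−1)^{α/(t−1)}/6, t·n^{α/(t−1)}/6]` and
`C(2⌊t·n^{α/(t−1)}/6⌋ − 1, t−1) + (n−2m)(t−1)·d/(t(n−1)^{α/(t−1)}/6) < 6n^α`. -/
theorem gadget_degree_bound (t : ℕ) (α : ℝ) (ht : 3 ≤ t)
    (hα1 : ((t : ℝ) - 1) / t ≤ α) (hα2 : α < (t : ℝ) - 1) :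
    ∃ m0 : ℕ, ∀ m : ℕ, m0 ≤ m →
      ∀ n d : ℕ,
        n = ⌈(6 * (m : ℝ) / t) ^ (((t : ℝ) - 1) / α)⌉₊ →
        d = ⌈(n : ℝ) ^ (((t : ℝ) * (α - 1) + 1) / ((t : ℝ) - 1))⌉₊ →
        ((t : ℝ) * ((n : ℝ) - 1) ^ (α / ((t : ℝ) - 1)) / 6 ≤ (m : ℝ) ∧
          (m : ℝ) ≤ (t : ℝ) * (n : ℝ) ^ (α / ((t : ℝ) - 1)) / 6) ∧
        ((2 * ⌊(t : ℝ) * (n : ℝ) ^ (α / ((t : ℝ) - 1)) / 6⌋₊ - 1).choose (t - 1) : ℝ)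
            + ((n : ℝ) - 2 * m) * ((t : ℝ) - 1) * (d : ℝ)
              / ((t : ℝ) * ((n : ℝ) - 1) ^ (α / ((t : ℝ) - 1)) / 6)
          < 6 * (n : ℝ) ^ α := by
  have hT3 : (3:ℝ) ≤ (t:ℝ) := by exact_mod_cast ht
  have hT0 : (0:ℝ) < t := by linarith
  have hT1' : (0:ℝ) < (t:ℝ) - 1 := by linarith
  have hα0 : 0 < α := by
    have h23 : (2:ℝ)/3 ≤ ((t:ℝ)-1)/t := by
      rw [div_le_div_iff₀ (by norm_num) hT0]; linarith
    linarith [h23.trans hα1]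
  set β := α / ((t:ℝ)-1) with hβdef
  have hβ0 : 0 < β := div_pos hα0 hT1'
  have hβ1 : β < 1 := (div_lt_one hT1').2 hα2
  set e := ((t:ℝ)*(α-1)+1)/((t:ℝ)-1) with hedef
  have he0 : 0 ≤ e := by
    apply div_nonneg _ hT1'.le
    have h := (div_le_iff₀ hT0).1 hα1
    nlinarith
  have hsum : 1 + e = α + β := by
    rw [hedef, hβdef]
    field_simp
    ring
  -- the constant c and its bound
  set c := ((t:ℝ)/3)^(t-1) / ((t-1)! : ℝ) with hcdef
  have hfacpos : (0:ℝ) < ((t-1)! : ℝ) := by exact_mod_cast Nat.factorial_pos _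
  have hc0 : 0 ≤ c := by positivity
  have hc : c < 6 / (t:ℝ) := by
    have hb := nat_fact_bound t ht
    have hbR : ((t:ℝ))^t < 2*3^t*((t-1)! : ℝ) := by exact_mod_cast hb
    rw [hcdef, div_lt_div_iff₀ hfacpos hT0]
    have h3pos : (0:ℝ) ≤ (3:ℝ)^(t-1) := by positivity
    apply lt_of_mul_lt_mul_right _ h3pos
    have e1 : ((t:ℝ)/3)^(t-1) * (t:ℝ) * 3^(t-1) = (t:ℝ)^t := by
      rw [mul_right_comm, ← mul_pow]
      have : (t:ℝ)/3*3 = (t:ℝ) := by field_simp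
      rw [this, ← pow_succ]
      congr 1
      omega
    have e2 : (6:ℝ) * ((t-1)! : ℝ) * 3^(t-1) = 2*3^t*((t-1)! : ℝ) := by
      have h3 : (3:ℝ)^t = 3^(t-1) * 3 := by
        rw [← pow_succ]; congr 1; omega
      rw [h3]; ring
    rw [e1, e2]
    exact hbR
  set δ := 6/(t:ℝ) - c with hδdef
  have hδ : 0 < δ := by rw [hδdef]; linarith
  clear_value β e c δ
  -- functions of m
  set x : ℕ → ℝ := fun m => (6*(m:ℝ)/(t:ℝ))^(((t:ℝ)-1)/α) with hxdef
  set N : ℕ → ℕ := fun m => ⌈x m⌉₊ with hNdef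
  have hexp0 : 0 < ((t:ℝ)-1)/α := div_pos hT1' hα0
  have hx_tendsto : Tendsto x atTop atTop := by
    apply (tendsto_rpow_atTop hexp0).comp
    exact (tendsto_natCast_atTop_atTop.const_mul_atTop (by norm_num : (0:ℝ) < 6)).atTop_div_const hT0
  have hN_tendsto : Tendsto N atTop atTop := by
    rw [tendsto_atTop]
    intro b
    filter_upwards [hx_tendsto.eventually_ge_atTop (b:ℝ)] with m hm
    have h2 : (b:ℝ) ≤ (N m : ℝ) := hm.trans (Nat.le_ceil (x m))
    exact_mod_cast h2
  -- eventual conditions on n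
  have hcond : ∀ᶠ n : ℕ in atTop,
      2 ≤ n ∧ (n:ℝ)/((n:ℝ)-1) ≤ 1 + δ/18 ∧ (0 < e → 36/δ ≤ (n:ℝ)^e) := by
    have c2 : ∀ᶠ n : ℕ in atTop, (n:ℝ)/((n:ℝ)-1) ≤ 1 + δ/18 := by
      filter_upwards [tendsto_natCast_atTop_atTop.eventually_ge_atTop (1 + 18/δ),
        eventually_ge_atTop 2] with n h1 h2
      have hn2 : (2:ℝ) ≤ n := by exact_mod_cast h2
      have hpos : 0 < (n:ℝ) - 1 := by linarith
      rw [div_le_iff₀ hpos]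
      have key : 18/δ ≤ (n:ℝ) - 1 := by linarith
      have key2 : 18 ≤ ((n:ℝ)-1) * δ := (div_le_iff₀ hδ).1 key
      have hexp : (1+δ/18)*((n:ℝ)-1) = (n:ℝ) - 1 + ((n:ℝ)-1)*δ/18 := by ring
      linarith
    have c3 : ∀ᶠ n : ℕ in atTop, (0 < e → 36/δ ≤ (n:ℝ)^e) := by
      by_cases he : 0 < e
      · have htd : Tendsto (fun n:ℕ => (n:ℝ)^e) atTop atTop :=
          (tendsto_rpow_atTop he).comp tendsto_natCast_atTop_atTop
        filter_upwards [htd.eventually_ge_atTop (36/δ)] with n h _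
        exact h
      · filter_upwards with n
        exact fun h => absurd h he
    exact (eventually_ge_atTop 2).and (c2.and c3)
  have hM : ∀ᶠ m : ℕ in atTop, 1 ≤ x m ∧
      (2 ≤ N m ∧ (N m:ℝ)/((N m:ℝ)-1) ≤ 1 + δ/18 ∧ (0 < e → 36/δ ≤ (N m:ℝ)^e)) :=
    (hx_tendsto.eventually_ge_atTop 1).and (hN_tendsto.eventually hcond)
  rw [eventually_atTop] at hM
  obtain ⟨m0, hm0⟩ := hM
  refine ⟨m0, fun m hm n d hn hd => ?_⟩
  obtain ⟨hx1, hn2', hratio, hι⟩ := hm0 m hm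
  have hnN : n = N m := hn
  rw [← hnN] at hn2' hratio hι
  -- basic facts about n
  have hν2 : (2:ℝ) ≤ (n:ℝ) := by exact_mod_cast hn2'
  have hν1 : (1:ℝ) ≤ (n:ℝ) := by linarith
  have hνpos : (0:ℝ) < (n:ℝ) := by linarith
  have hν1pos : (0:ℝ) < (n:ℝ) - 1 := by linarith
  have hxm0 : (0:ℝ) ≤ x m := Real.rpow_nonneg (by positivity) _
  have hxm : x m ≤ (n:ℝ) := by
    rw [hnN]; exact Nat.le_ceil (x m)
  have hxβ : (x m)^β = 6*(m:ℝ)/(t:ℝ) := by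
    have hxval : x m = (6*(m:ℝ)/(t:ℝ))^(((t:ℝ)-1)/α) := rfl
    rw [hxval, ← Real.rpow_mul (by positivity)]
    rw [show ((t:ℝ)-1)/α * β = 1 by rw [hβdef]; field_simp]
    exact Real.rpow_one _
  -- Part 1
  have hup : (m:ℝ) ≤ (t:ℝ) * (n:ℝ)^β / 6 := by
    have h1 : (x m)^β ≤ (n:ℝ)^β := Real.rpow_le_rpow hxm0 hxm hβ0.le
    rw [hxβ, div_le_iff₀ hT0] at h1
    linarith
  have hlow : (t:ℝ) * ((n:ℝ)-1)^β / 6 ≤ m := by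
    have hceil : (n:ℝ) < x m + 1 := by
      rw [hnN]; exact Nat.ceil_lt_add_one hxm0
    have h1 : ((n:ℝ)-1)^β ≤ (x m)^β :=
      Real.rpow_le_rpow (by linarith) (by linarith) hβ0.le
    rw [hxβ, le_div_iff₀ hT0] at h1
    linarith
  refine ⟨⟨hlow, hup⟩, ?_⟩
  -- Part 2
  have hA0 : (0:ℝ) < (n:ℝ)^α := Real.rpow_pos_of_pos hνpos α
  have hQ : (0:ℝ) < (t:ℝ)*((n:ℝ)-1)^β/6 :=
    div_pos (mul_pos hT0 (Real.rpow_pos_of_pos hν1pos β)) (by norm_num)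
  -- term1 bound
  have hterm1 : (((2 * ⌊(t:ℝ) * (n:ℝ)^β/6⌋₊ - 1).choose (t-1)) : ℝ) ≤ c * (n:ℝ)^α := by
    set k := 2 * ⌊(t:ℝ) * (n:ℝ)^β/6⌋₊ - 1 with hkdef
    have hfloor : ((⌊(t:ℝ)*(n:ℝ)^β/6⌋₊ : ℕ) : ℝ) ≤ (t:ℝ)*(n:ℝ)^β/6 :=
      Nat.floor_le (by positivity)
    have hk_le : (k:ℝ) ≤ (t:ℝ)*(n:ℝ)^β/3 := by
      have h1 : k ≤ 2*⌊(t:ℝ)*(n:ℝ)^β/6⌋₊ := Nat.sub_le _ _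
      have h2 : (k:ℝ) ≤ 2*((⌊(t:ℝ)*(n:ℝ)^β/6⌋₊:ℕ):ℝ) := by exact_mod_cast h1
      linarith
    have hchoose : ((k.choose (t-1)):ℝ) ≤ (k:ℝ)^(t-1) / ((t-1)! : ℝ) := by
      exact_mod_cast Nat.choose_le_pow_div (t-1) k (α := ℝ)
    have hpow : (k:ℝ)^(t-1) ≤ ((t:ℝ)*(n:ℝ)^β/3)^(t-1) :=
      pow_le_pow_left₀ (by positivity) hk_le _
    have hrw : ((t:ℝ)*(n:ℝ)^β/3)^(t-1) = ((t:ℝ)/3)^(t-1) * (n:ℝ)^α := by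
      rw [show (t:ℝ)*(n:ℝ)^β/3 = ((t:ℝ)/3) * (n:ℝ)^β by ring, mul_pow]
      congr 1
      rw [← Real.rpow_natCast ((n:ℝ)^β) (t-1), ← Real.rpow_mul (Nat.cast_nonneg n)]
      congr 1
      rw [Nat.cast_sub (by omega : 1 ≤ t), Nat.cast_one, hβdef]
      field_simp
    calc ((k.choose (t-1)):ℝ) ≤ (k:ℝ)^(t-1)/((t-1)! : ℝ) := hchoose
      _ ≤ ((t:ℝ)*(n:ℝ)^β/3)^(t-1)/((t-1)! : ℝ) := by
          exact div_le_div_of_nonneg_right hpow hfacpos.le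
      _ = c * (n:ℝ)^α := by rw [hrw, hcdef]; ring
  -- d bound with excess u
  obtain ⟨u, hu0, hdu, huterm⟩ :
      ∃ u : ℝ, 0 ≤ u ∧ (d:ℝ) ≤ (n:ℝ)^e + u ∧
        (n:ℝ)*(((t:ℝ)-1)*u)/((t:ℝ)*((n:ℝ)-1)^β/6) ≤ δ/3*(n:ℝ)^α := by
    rcases he0.eq_or_lt with he | he
    · refine ⟨0, le_refl _, ?_, ?_⟩
      · rw [hd, ← he, Real.rpow_zero]
        norm_num
      · simp only [mul_zero, zero_div]
        exact mul_nonneg (div_nonneg hδ.le (by norm_num)) hA0.le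
    · refine ⟨1, zero_le_one, ?_, ?_⟩
      · rw [hd]
        have := Nat.ceil_lt_add_one (Real.rpow_nonneg (Nat.cast_nonneg n) e)
        linarith
      · -- the excess estimate
        have hfrac : ((t:ℝ)-1)/(t:ℝ) ≤ 1 := by rw [div_le_one hT0]; linarith
        have e3 : (n:ℝ)*(((t:ℝ)-1)*1)/((t:ℝ)*((n:ℝ)-1)^β/6)
            = 6*(n:ℝ)/(((n:ℝ)-1)^β) * (((t:ℝ)-1)/(t:ℝ)) := by
          have h1 : ((n:ℝ)-1)^β ≠ 0 := ne_of_gt (Real.rpow_pos_of_pos hν1pos β)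
          field_simp
        have g2 : ((n:ℝ)/2)^β ≤ ((n:ℝ)-1)^β :=
          Real.rpow_le_rpow (by positivity) (by linarith) hβ0.le
        have g3 : ((n:ℝ)/2)^β = (n:ℝ)^β/(2:ℝ)^β :=
          Real.div_rpow (Nat.cast_nonneg n) (by norm_num) β
        have g4 : (2:ℝ)^β ≤ 2 := by
          calc (2:ℝ)^β ≤ (2:ℝ)^(1:ℝ) :=
                Real.rpow_le_rpow_of_exponent_le one_le_two hβ1.le
            _ = 2 := Real.rpow_one 2
        have g5 : (n:ℝ)^β/2 ≤ ((n:ℝ)-1)^β := by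
          have hnb : (0:ℝ) ≤ (n:ℝ)^β := Real.rpow_nonneg (Nat.cast_nonneg n) β
          have : (n:ℝ)^β/2 ≤ (n:ℝ)^β/(2:ℝ)^β := by
            apply div_le_div_of_nonneg_left hnb (by positivity) g4
          calc (n:ℝ)^β/2 ≤ (n:ℝ)^β/(2:ℝ)^β := this
            _ = ((n:ℝ)/2)^β := g3.symm
            _ ≤ ((n:ℝ)-1)^β := g2
        have g6 : 6*(n:ℝ)/(((n:ℝ)-1)^β) ≤ 6*(n:ℝ)/((n:ℝ)^β/2) := by
          apply div_le_div_of_nonneg_left (by positivity)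
            (div_pos (Real.rpow_pos_of_pos hνpos β) two_pos) g5
        have g7 : 6*(n:ℝ)/((n:ℝ)^β/2) = 12*(n:ℝ)^((1:ℝ)-β) := by
          rw [Real.rpow_sub hνpos, Real.rpow_one]
          have hb : (n:ℝ)^β ≠ 0 := ne_of_gt (Real.rpow_pos_of_pos hνpos β)
          field_simp
          ring
        have hα_split : (n:ℝ)^α = (n:ℝ)^((1:ℝ)-β) * (n:ℝ)^e := by
          rw [← Real.rpow_add hνpos]
          congr 1
          linarith [hsum]
        have h36 : 36 ≤ (n:ℝ)^e * δ := (div_le_iff₀ hδ).1 (hι he)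
        have hp : (0:ℝ) ≤ (n:ℝ)^((1:ℝ)-β) := Real.rpow_nonneg (Nat.cast_nonneg n) _
        have hfin : 12*(n:ℝ)^((1:ℝ)-β) ≤ δ/3*(n:ℝ)^α := by
          rw [hα_split]
          have := mul_le_mul_of_nonneg_right h36 hp
          nlinarith
        calc (n:ℝ)*(((t:ℝ)-1)*1)/((t:ℝ)*((n:ℝ)-1)^β/6)
            = 6*(n:ℝ)/(((n:ℝ)-1)^β) * (((t:ℝ)-1)/(t:ℝ)) := e3
          _ ≤ 6*(n:ℝ)/(((n:ℝ)-1)^β) * 1 := by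
              apply mul_le_mul_of_nonneg_left hfrac (by positivity)
          _ = 6*(n:ℝ)/(((n:ℝ)-1)^β) := by ring
          _ ≤ 6*(n:ℝ)/((n:ℝ)^β/2) := g6
          _ = 12*(n:ℝ)^((1:ℝ)-β) := g7
          _ ≤ δ/3*(n:ℝ)^α := hfin
  -- term2 bound
  have hterm2 : ((n:ℝ) - 2*m)*((t:ℝ)-1)*(d:ℝ)/((t:ℝ)*((n:ℝ)-1)^β/6)
      ≤ 6*((t:ℝ)-1)/(t:ℝ)*(1+δ/18)*(n:ℝ)^α + δ/3*(n:ℝ)^α := by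
    have ht1 : (0:ℝ) ≤ (t:ℝ)-1 := by linarith
    have hnum : ((n:ℝ)-2*m)*((t:ℝ)-1)*(d:ℝ) ≤ (n:ℝ)*(((t:ℝ)-1)*((n:ℝ)^e+u)) := by
      have h1 : (n:ℝ) - 2*m ≤ (n:ℝ) := by
        have : (0:ℝ) ≤ (m:ℝ) := Nat.cast_nonneg m
        linarith
      have h2 : ((t:ℝ)-1)*(d:ℝ) ≤ ((t:ℝ)-1)*((n:ℝ)^e+u) :=
        mul_le_mul_of_nonneg_left hdu ht1
      have h3 : (0:ℝ) ≤ ((t:ℝ)-1)*(d:ℝ) := mul_nonneg ht1 (Nat.cast_nonneg d)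
      calc ((n:ℝ)-2*m)*((t:ℝ)-1)*(d:ℝ) = ((n:ℝ)-2*m)*(((t:ℝ)-1)*(d:ℝ)) := by ring
        _ ≤ (n:ℝ)*(((t:ℝ)-1)*(d:ℝ)) := mul_le_mul_of_nonneg_right h1 h3
        _ ≤ (n:ℝ)*(((t:ℝ)-1)*((n:ℝ)^e+u)) := mul_le_mul_of_nonneg_left h2 (Nat.cast_nonneg n)
    have s1 : ((n:ℝ)-2*m)*((t:ℝ)-1)*(d:ℝ)/((t:ℝ)*((n:ℝ)-1)^β/6)
        ≤ (n:ℝ)*(((t:ℝ)-1)*((n:ℝ)^e+u))/((t:ℝ)*((n:ℝ)-1)^β/6) :=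
      div_le_div_of_nonneg_right hnum hQ.le
    have s3 : (n:ℝ)*(((t:ℝ)-1)*((n:ℝ)^e+u))/((t:ℝ)*((n:ℝ)-1)^β/6)
        = (n:ℝ)*(((t:ℝ)-1)*(n:ℝ)^e)/((t:ℝ)*((n:ℝ)-1)^β/6)
          + (n:ℝ)*(((t:ℝ)-1)*u)/((t:ℝ)*((n:ℝ)-1)^β/6) := by ring
    have key : (n:ℝ) * (n:ℝ)^e = (n:ℝ)^α * (n:ℝ)^β := by
      have h1 : (n:ℝ)^((1:ℝ)+e) = (n:ℝ)^(1:ℝ) * (n:ℝ)^e := Real.rpow_add hνpos 1 e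
      rw [Real.rpow_one] at h1
      rw [← h1, hsum, Real.rpow_add hνpos]
    have e2 : (n:ℝ)*(((t:ℝ)-1)*(n:ℝ)^e)/((t:ℝ)*((n:ℝ)-1)^β/6)
        = 6*((t:ℝ)-1)/(t:ℝ)*(n:ℝ)^α*((n:ℝ)^β/((n:ℝ)-1)^β) := by
      have hmm : (n:ℝ)*(((t:ℝ)-1)*(n:ℝ)^e) = ((t:ℝ)-1)*((n:ℝ)^α*(n:ℝ)^β) := by
        rw [← key]; ring
      rw [hmm]
      have h1 : ((n:ℝ)-1)^β ≠ 0 := ne_of_gt (Real.rpow_pos_of_pos hν1pos β)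
      have hTn : (t:ℝ) ≠ 0 := ne_of_gt hT0
      field_simp
    have hdivpow : (n:ℝ)^β/((n:ℝ)-1)^β ≤ 1 + δ/18 := by
      rw [← Real.div_rpow (Nat.cast_nonneg n) hν1pos.le]
      have hbase : 1 ≤ (n:ℝ)/((n:ℝ)-1) := (one_le_div hν1pos).2 (by linarith)
      calc ((n:ℝ)/((n:ℝ)-1))^β ≤ ((n:ℝ)/((n:ℝ)-1))^(1:ℝ) :=
            Real.rpow_le_rpow_of_exponent_le hbase hβ1.le
        _ = (n:ℝ)/((n:ℝ)-1) := Real.rpow_one _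
        _ ≤ 1 + δ/18 := hratio
    have hcoef : (0:ℝ) ≤ 6*((t:ℝ)-1)/(t:ℝ)*(n:ℝ)^α := by
      apply mul_nonneg (div_nonneg (by linarith) hT0.le) hA0.le
    have s4 : (n:ℝ)*(((t:ℝ)-1)*(n:ℝ)^e)/((t:ℝ)*((n:ℝ)-1)^β/6)
        ≤ 6*((t:ℝ)-1)/(t:ℝ)*(1+δ/18)*(n:ℝ)^α := by
      rw [e2]
      calc 6*((t:ℝ)-1)/(t:ℝ)*(n:ℝ)^α*((n:ℝ)^β/((n:ℝ)-1)^β)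
          ≤ 6*((t:ℝ)-1)/(t:ℝ)*(n:ℝ)^α*(1+δ/18) :=
            mul_le_mul_of_nonneg_left hdivpow hcoef
        _ = 6*((t:ℝ)-1)/(t:ℝ)*(1+δ/18)*(n:ℝ)^α := by ring
    calc ((n:ℝ)-2*m)*((t:ℝ)-1)*(d:ℝ)/((t:ℝ)*((n:ℝ)-1)^β/6)
        ≤ (n:ℝ)*(((t:ℝ)-1)*((n:ℝ)^e+u))/((t:ℝ)*((n:ℝ)-1)^β/6) := s1
      _ = (n:ℝ)*(((t:ℝ)-1)*(n:ℝ)^e)/((t:ℝ)*((n:ℝ)-1)^β/6)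
          + (n:ℝ)*(((t:ℝ)-1)*u)/((t:ℝ)*((n:ℝ)-1)^β/6) := s3
      _ ≤ 6*((t:ℝ)-1)/(t:ℝ)*(1+δ/18)*(n:ℝ)^α + δ/3*(n:ℝ)^α := add_le_add s4 huterm
  -- constants
  have hconst : c + 6*((t:ℝ)-1)/(t:ℝ)*(1+δ/18) + δ/3 < 6 := by
    have hu0' : 0 < 6/(t:ℝ) := by positivity
    have hu2 : 6/(t:ℝ) ≤ 2 := by
      rw [div_le_iff₀ hT0]; linarith
    have hfr : 6*((t:ℝ)-1)/(t:ℝ) = 6 - 6/(t:ℝ) := by field_simp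
    rw [hfr]
    have hceq : c = 6/(t:ℝ) - δ := by rw [hδdef]; ring
    rw [hceq]
    nlinarith [mul_pos hu0' hδ]
  calc (((2 * ⌊(t:ℝ) * (n:ℝ)^β/6⌋₊ - 1).choose (t-1)) : ℝ)
        + ((n:ℝ) - 2*m)*((t:ℝ)-1)*(d:ℝ)/((t:ℝ)*((n:ℝ)-1)^β/6)
      ≤ c*(n:ℝ)^α + (6*((t:ℝ)-1)/(t:ℝ)*(1+δ/18)*(n:ℝ)^α + δ/3*(n:ℝ)^α) :=
        add_le_add hterm1 hterm2
    _ = (c + 6*((t:ℝ)-1)/(t:ℝ)*(1+δ/18) + δ/3)*(n:ℝ)^α := by ring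
    _ < 6*(n:ℝ)^α := mul_lt_mul_of_pos_right hconst hA0
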